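/- Let q₂, q₃ ∈ ℂ with (q₂,q₃) ≠ (0,0). The function h : ℝ⁴ → ℂ given by h(x) = (q₂(x₁+ix₂) − q₃(x₃−ix₄)) / (q₃(x₁−ix₂) + q₂(x₃+ix₄))³ is harmonic on the open subset of ℝ⁴ where the denominator is nonzero: Δh = 0 there. -/

import Mathlib

open scoped BigOperators

/-- Partial derivative in the `i`-th coordinate direction. -/
noncomputable def pd (i : Fin 4) (f : EuclideanSpace ℝ (Fin 4) → ℂ)
    (x : EuclideanSpace ℝ (Fin 4)) : ℂ :=
  deriv (fun t : ℝ => f (x + t • EuclideanSpace.single i (1 : ℝ))) 0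

/-- The classical Laplace operator `Δ` on `ℝ⁴`, acting on complex-valued functions. -/
noncomputable def lap (f : EuclideanSpace ℝ (Fin 4) → ℂ)
    (x : EuclideanSpace ℝ (Fin 4)) : ℂ :=
  ∑ i, pd i (pd i f) x

/-- `z = x₁ + i x₂`. -/
noncomputable def zc (x : EuclideanSpace ℝ (Fin 4)) : ℂ := (x 0 : ℂ) + Complex.I * (x 1 : ℂ)

/-- `w = x₃ + i x₄`. -/
noncomputable def wc (x : EuclideanSpace ℝ (Fin 4)) : ℂ := (x 2 : ℂ) + Complex.I * (x 3 : ℂ)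

private lemma affine_hasDerivAt (A α : ℂ) (t₀ : ℝ) :
    HasDerivAt (fun t : ℝ => A + (t : ℂ) * α) α t₀ := by
  have h1 : HasDerivAt (fun t : ℝ => (t : ℂ)) 1 t₀ := by
    exact (hasDerivAt_id t₀).ofReal_comp
  simpa using (h1.mul_const α).const_add A

private lemma quot3_hasDerivAt (A B α β : ℂ) (hB : B ≠ 0) :
    HasDerivAt (fun t : ℝ => (A + (t : ℂ) * α) / (B + (t : ℂ) * β) ^ 3)
      (α / B ^ 3 - 3 * β * A / B ^ 4) 0 := by
  have hn := affine_hasDerivAt A α 0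
  have hd := affine_hasDerivAt B β 0
  have hd3 : HasDerivAt (fun t : ℝ => (B + (t : ℂ) * β) ^ 3) (3 * B ^ 2 * β) 0 := by
    refine (hd.pow 3).congr_deriv ?_
    simp
  have hq := hn.div hd3 (by simpa using pow_ne_zero 3 hB)
  refine hq.congr_deriv ?_
  simp
  field_simp

private lemma quot4_hasDerivAt (A B α β : ℂ) (hB : B ≠ 0) :
    HasDerivAt (fun t : ℝ => (A + (t : ℂ) * α) / (B + (t : ℂ) * β) ^ 4)
      (α / B ^ 4 - 4 * β * A / B ^ 5) 0 := by
  have hn := affine_hasDerivAt A α 0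
  have hd := affine_hasDerivAt B β 0
  have hd4 : HasDerivAt (fun t : ℝ => (B + (t : ℂ) * β) ^ 4) (4 * B ^ 3 * β) 0 := by
    refine (hd.pow 4).congr_deriv ?_
    simp
  have hq := hn.div hd4 (by simpa using pow_ne_zero 4 hB)
  refine hq.congr_deriv ?_
  simp
  field_simp

private lemma pd_quot (n dd : EuclideanSpace ℝ (Fin 4) → ℂ) (i : Fin 4) (α β : ℂ)
    (hn : ∀ (y : EuclideanSpace ℝ (Fin 4)) (t : ℝ),
      n (y + t • EuclideanSpace.single i (1 : ℝ)) = n y + t * α)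
    (hd : ∀ (y : EuclideanSpace ℝ (Fin 4)) (t : ℝ),
      dd (y + t • EuclideanSpace.single i (1 : ℝ)) = dd y + t * β)
    (x : EuclideanSpace ℝ (Fin 4)) (hx : dd x ≠ 0) :
    pd i (fun y => n y / dd y ^ 3) x = α / dd x ^ 3 - 3 * β * n x / dd x ^ 4 := by
  unfold pd
  have h : (fun t : ℝ => n (x + t • EuclideanSpace.single i (1 : ℝ)) /
      dd (x + t • EuclideanSpace.single i (1 : ℝ)) ^ 3)
      = fun t : ℝ => (n x + (t : ℂ) * α) / (dd x + (t : ℂ) * β) ^ 3 := by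
    funext t
    rw [hn, hd]
  rw [show (fun t : ℝ => (fun y => n y / dd y ^ 3) (x + t • EuclideanSpace.single i (1 : ℝ)))
      = fun t : ℝ => (n x + (t : ℂ) * α) / (dd x + (t : ℂ) * β) ^ 3 from h]
  exact (quot3_hasDerivAt (n x) (dd x) α β hx).deriv

private lemma pd2_quot (n dd : EuclideanSpace ℝ (Fin 4) → ℂ) (i : Fin 4) (α β : ℂ)
    (hn : ∀ (y : EuclideanSpace ℝ (Fin 4)) (t : ℝ),
      n (y + t • EuclideanSpace.single i (1 : ℝ)) = n y + t * α)
    (hd : ∀ (y : EuclideanSpace ℝ (Fin 4)) (t : ℝ),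
      dd (y + t • EuclideanSpace.single i (1 : ℝ)) = dd y + t * β)
    (x : EuclideanSpace ℝ (Fin 4)) (hx : dd x ≠ 0) :
    pd i (pd i (fun y => n y / dd y ^ 3)) x
      = -6 * α * β / dd x ^ 4 + 12 * β ^ 2 * n x / dd x ^ 5 := by
  have hcont : Continuous fun t : ℝ => dd x + (t : ℂ) * β := by continuity
  have hev0 : ∀ᶠ t : ℝ in nhds 0, dd x + (t : ℂ) * β ≠ 0 := by
    have hc := hcont.continuousAt (x := 0)
    exact hc.eventually_ne (by simpa using hx)
  have hev : (fun t : ℝ => pd i (fun y => n y / dd y ^ 3)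
        (x + t • EuclideanSpace.single i (1 : ℝ)))
      =ᶠ[nhds 0] fun t : ℝ =>
        ((α * dd x - 3 * β * n x) + (t : ℂ) * (-2 * α * β)) / (dd x + (t : ℂ) * β) ^ 4 := by
    filter_upwards [hev0] with t ht
    have hdx : dd (x + t • EuclideanSpace.single i (1 : ℝ)) ≠ 0 := by
      rw [hd]; exact ht
    rw [pd_quot n dd i α β hn hd _ hdx, hn, hd]
    field_simp
    ring
  show deriv _ 0 = _
  rw [hev.deriv_eq, (quot4_hasDerivAt _ _ _ _ hx).deriv]
  field_simp
  ring

theorem stmt_6 (q₂ q₃ : ℂ) (hq : (q₂, q₃) ≠ (0, 0)) :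
    ∀ x : EuclideanSpace ℝ (Fin 4),
      q₃ * star (zc x) + q₂ * wc x ≠ 0 →
      lap (fun y => (q₂ * zc y - q₃ * star (wc y))
        / (q₃ * star (zc y) + q₂ * wc y) ^ 3) x = 0 := by
  intro x hx
  set n : EuclideanSpace ℝ (Fin 4) → ℂ := fun y => q₂ * zc y - q₃ * star (wc y) with hn_def
  set dd : EuclideanSpace ℝ (Fin 4) → ℂ := fun y => q₃ * star (zc y) + q₂ * wc y with hd_def
  have coord : ∀ (i : Fin 4) (y : EuclideanSpace ℝ (Fin 4)) (t : ℝ) (j : Fin 4),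
      (y + t • EuclideanSpace.single i (1 : ℝ)) j = y j + t * (if j = i then 1 else 0) := by
    intro i y t j
    simp [EuclideanSpace.single_apply, mul_comm]
  have key : ∀ j : Fin 4, ∀ (y : EuclideanSpace ℝ (Fin 4)) (t : ℝ),
      zc (y + t • EuclideanSpace.single j (1 : ℝ))
        = zc y + (t : ℂ) * (if j = 0 then 1 else 0) + (t : ℂ) * Complex.I * (if j = 1 then 1 else 0) ∧
      wc (y + t • EuclideanSpace.single j (1 : ℝ))
        = wc y + (t : ℂ) * (if j = 2 then 1 else 0) + (t : ℂ) * Complex.I * (if j = 3 then 1 else 0) := by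
    intro j y t
    constructor <;> simp only [zc, wc, coord] <;> fin_cases j <;> norm_num <;> push_cast <;> ring
  have h0n : ∀ (y : EuclideanSpace ℝ (Fin 4)) (t : ℝ),
      n (y + t • EuclideanSpace.single 0 (1 : ℝ)) = n y + t * q₂ := by
    intro y t; simp only [hn_def, (key 0 y t).1, (key 0 y t).2]
    simp (config := { decide := true }) only [if_true, if_false, eq_self_iff_true,
      Complex.star_def, map_add, map_mul, map_zero, Complex.conj_ofReal, Complex.conj_I,
      add_zero, zero_add, mul_zero, zero_mul, mul_one, one_mul]
    ring
  have h0d : ∀ (y : EuclideanSpace ℝ (Fin 4)) (t : ℝ),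
      dd (y + t • EuclideanSpace.single 0 (1 : ℝ)) = dd y + t * q₃ := by
    intro y t; simp only [hd_def, (key 0 y t).1, (key 0 y t).2]
    simp (config := { decide := true }) only [if_true, if_false, eq_self_iff_true,
      Complex.star_def, map_add, map_mul, map_zero, Complex.conj_ofReal, Complex.conj_I,
      add_zero, zero_add, mul_zero, zero_mul, mul_one, one_mul]
    ring
  have h1n : ∀ (y : EuclideanSpace ℝ (Fin 4)) (t : ℝ),
      n (y + t • EuclideanSpace.single 1 (1 : ℝ)) = n y + t * (Complex.I * q₂) := by
    intro y t; simp only [hn_def, (key 1 y t).1, (key 1 y t).2]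
    simp (config := { decide := true }) only [if_true, if_false, eq_self_iff_true,
      Complex.star_def, map_add, map_mul, map_zero, Complex.conj_ofReal, Complex.conj_I,
      add_zero, zero_add, mul_zero, zero_mul, mul_one, one_mul]
    ring
  have h1d : ∀ (y : EuclideanSpace ℝ (Fin 4)) (t : ℝ),
      dd (y + t • EuclideanSpace.single 1 (1 : ℝ)) = dd y + t * (-(Complex.I * q₃)) := by
    intro y t; simp only [hd_def, (key 1 y t).1, (key 1 y t).2]
    simp (config := { decide := true }) only [if_true, if_false, eq_self_iff_true,
      Complex.star_def, map_add, map_mul, map_zero, Complex.conj_ofReal, Complex.conj_I,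
      add_zero, zero_add, mul_zero, zero_mul, mul_one, one_mul]
    ring
  have h2n : ∀ (y : EuclideanSpace ℝ (Fin 4)) (t : ℝ),
      n (y + t • EuclideanSpace.single 2 (1 : ℝ)) = n y + t * (-q₃) := by
    intro y t; simp only [hn_def, (key 2 y t).1, (key 2 y t).2]
    simp (config := { decide := true }) only [if_true, if_false, eq_self_iff_true,
      Complex.star_def, map_add, map_mul, map_zero, Complex.conj_ofReal, Complex.conj_I,
      add_zero, zero_add, mul_zero, zero_mul, mul_one, one_mul]
    ring
  have h2d : ∀ (y : EuclideanSpace ℝ (Fin 4)) (t : ℝ),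
      dd (y + t • EuclideanSpace.single 2 (1 : ℝ)) = dd y + t * q₂ := by
    intro y t; simp only [hd_def, (key 2 y t).1, (key 2 y t).2]
    simp (config := { decide := true }) only [if_true, if_false, eq_self_iff_true,
      Complex.star_def, map_add, map_mul, map_zero, Complex.conj_ofReal, Complex.conj_I,
      add_zero, zero_add, mul_zero, zero_mul, mul_one, one_mul]
    ring
  have h3n : ∀ (y : EuclideanSpace ℝ (Fin 4)) (t : ℝ),
      n (y + t • EuclideanSpace.single 3 (1 : ℝ)) = n y + t * (Complex.I * q₃) := by
    intro y t; simp only [hn_def, (key 3 y t).1, (key 3 y t).2]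
    simp (config := { decide := true }) only [if_true, if_false, eq_self_iff_true,
      Complex.star_def, map_add, map_mul, map_zero, Complex.conj_ofReal, Complex.conj_I,
      add_zero, zero_add, mul_zero, zero_mul, mul_one, one_mul]
    ring
  have h3d : ∀ (y : EuclideanSpace ℝ (Fin 4)) (t : ℝ),
      dd (y + t • EuclideanSpace.single 3 (1 : ℝ)) = dd y + t * (Complex.I * q₂) := by
    intro y t; simp only [hd_def, (key 3 y t).1, (key 3 y t).2]
    simp (config := { decide := true }) only [if_true, if_false, eq_self_iff_true,
      Complex.star_def, map_add, map_mul, map_zero, Complex.conj_ofReal, Complex.conj_I,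
      add_zero, zero_add, mul_zero, zero_mul, mul_one, one_mul]
    ring
  have hdd : dd x ≠ 0 := hx
  have e0 := pd2_quot n dd 0 q₂ q₃ h0n h0d x hdd
  have e1 := pd2_quot n dd 1 (Complex.I * q₂) (-(Complex.I * q₃)) h1n h1d x hdd
  have e2 := pd2_quot n dd 2 (-q₃) q₂ h2n h2d x hdd
  have e3 := pd2_quot n dd 3 (Complex.I * q₃) (Complex.I * q₂) h3n h3d x hdd
  have hfun : (fun y => (q₂ * zc y - q₃ * star (wc y))
      / (q₃ * star (zc y) + q₂ * wc y) ^ 3) = fun y => n y / dd y ^ 3 := rfl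
  rw [hfun]
  simp only [lap, Fin.sum_univ_four, e0, e1, e2, e3]
  have hI := Complex.I_sq
  field_simp
  ring_nf
  rw [Complex.I_sq]
  ring
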